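/- Let G be a graph with m edges, F a cycle of G, and f a Z2×Z2-flow on G with E(G) − E(F) ⊆ supp(f). Let C1 = E_{f=(0,1)}(G) ∪ E_{f=(1,0)}(G) and C2 = E_{f=(0,1)}(G) ∪ E_{f=(1,1)}(G). Then {C1, C2, C1 Δ F} is a cycle cover of G whose length equals 2|C1 − E(F)| + |C2| + |E(F)|, which equals m + |C1 − E(F)| + |C2 ∩ E(F)| + |(C1 ∩ C2) − E(F)|. -/
import Mathlib


/-- A finite multigraph: loops and multiple edges are allowed.  Each edge is
assigned its (unordered) pair of endpoints. -/
structure Multigraph where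
  V : Type
  E : Type
  finV : Finite V
  finE : Finite E
  ends : E → Sym2 V

attribute [instance] Multigraph.finV Multigraph.finE

namespace Multigraph

/-- A walk of length `n`: a sequence of `n+1` vertices and `n` edges, each edge
joining consecutive vertices. -/
structure Walk (G : Multigraph) (n : ℕ) where
  vtx : Fin (n + 1) → G.V
  edge : Fin n → G.E
  compat : ∀ i : Fin n, G.ends (edge i) = s(vtx i.castSucc, vtx i.succ)

variable (G : Multigraph)

/-- The degree of a vertex (a loop counts twice). -/
noncomputable def degree (v : G.V) : ℕ :=
  Nat.card {e : G.E // v ∈ G.ends e ∧ ¬ (G.ends e).IsDiag} +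
    2 * Nat.card {e : G.E // G.ends e = s(v, v)}

/-- The degree of a vertex in the subgraph with edge set `S` (a loop counts twice). -/
noncomputable def degIn (S : Set G.E) (v : G.V) : ℕ :=
  Nat.card {e : G.E // e ∈ S ∧ v ∈ G.ends e ∧ ¬ (G.ends e).IsDiag} +
    2 * Nat.card {e : G.E // e ∈ S ∧ G.ends e = s(v, v)}

/-- A cycle (identified with its edge set): every vertex has even degree. -/
def IsCycle (S : Set G.E) : Prop := ∀ v : G.V, Even (G.degIn S v)

/-- `u` is joined to `w` by a path using only edges in `S`. -/
def Reaches (S : Set G.E) (u w : G.V) : Prop :=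
  Relation.ReflTransGen (fun a b => ∃ e ∈ S, G.ends e = s(a, b)) u w

/-- A circuit (identified with its edge set): a connected `2`-regular subgraph. -/
def IsCircuit (S : Set G.E) : Prop :=
  S.Nonempty ∧
    (∀ v : G.V, (∃ e ∈ S, v ∈ G.ends e) → G.degIn S v = 2) ∧
    ∀ u w : G.V, (∃ e ∈ S, u ∈ G.ends e) → (∃ e ∈ S, w ∈ G.ends e) → G.Reaches S u w

/-- A `ℤ₂×ℤ₂`-flow: at every vertex the values on the incident edges sum to zero
(a loop contributes its value twice, hence zero). -/
def IsFlow (f : G.E → ZMod 2 × ZMod 2) : Prop :=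
  ∀ v : G.V, ∑ᶠ e ∈ {e : G.E | v ∈ G.ends e ∧ ¬ (G.ends e).IsDiag}, f e = 0

/-- The support of a flow. -/
def supp (f : G.E → ZMod 2 × ZMod 2) : Set G.E := {e | f e ≠ 0}

/-- Contraction of the edge set `C`: delete the edges of `C` and identify the
ends of each edge of `C`. -/
def contract (C : Set G.E) : Multigraph where
  V := Quot fun u w : G.V => ∃ e ∈ C, G.ends e = s(u, w)
  E := {e : G.E // e ∉ C}
  finV := Finite.of_surjective _ (Quot.mk_surjective)
  finE := inferInstance
  ends := fun e => (G.ends e.1).map (Quot.mk _)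

/-- A path: all vertices distinct (hence all edges distinct, which we also require). -/
def Walk.IsPath {n : ℕ} (W : G.Walk n) : Prop :=
  Function.Injective W.vtx ∧ Function.Injective W.edge

/-- A nontrivial path all of whose internal vertices have degree `2` in `G`. -/
def IsDeg2Path {n : ℕ} (W : G.Walk n) : Prop :=
  1 ≤ n ∧ W.IsPath G ∧ ∀ i : Fin (n + 1), 0 < i.val → i.val < n → G.degree (W.vtx i) = 2

/-- A thread of `G`: a maximal path all of whose internal vertices have degree `2`
in `G` (maximal: its edge set is not properly contained in the edge set of
another such path). -/
def IsThread {n : ℕ} (W : G.Walk n) : Prop :=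
  G.IsDeg2Path W ∧ ∀ (m : ℕ) (Q : G.Walk m), G.IsDeg2Path Q →
    Set.range W.edge ⊆ Set.range Q.edge → Set.range Q.edge = Set.range W.edge

/-- A cycle cover: a (multi)collection of cycles covering every edge. -/
def IsCycleCover (𝒞 : Multiset (Set G.E)) : Prop :=
  (∀ S ∈ 𝒞, G.IsCycle S) ∧ ∀ e : G.E, ∃ S ∈ 𝒞, e ∈ S

/-- The length of a cycle cover: the sum of the lengths of its cycles. -/
noncomputable def coverLength (𝒞 : Multiset (Set G.E)) : ℕ :=
  (𝒞.map Set.ncard).sum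

/-- The minimum length of a cycle cover of `G`. -/
noncomputable def cc : ℕ :=
  sInf {L : ℕ | ∃ 𝒞 : Multiset (Set G.E), G.IsCycleCover 𝒞 ∧ G.coverLength 𝒞 = L}

/-- `G` is bridgeless: the ends of each edge `e` are still joined after deleting `e`. -/
def Bridgeless : Prop :=
  ∀ (e : G.E) (u w : G.V), G.ends e = s(u, w) → G.Reaches {e}ᶜ u w

/-- The connected component of the subgraph with edge set `S` containing the edge `e₀`. -/
def component (S : Set G.E) (e₀ : G.E) : Set G.E :=
  {e ∈ S | ∃ u w : G.V, u ∈ G.ends e₀ ∧ w ∈ G.ends e ∧ G.Reaches S u w}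

/-- `B` is a connected component of the subgraph with edge set `S`. -/
def IsComponent (S B : Set G.E) : Prop := ∃ e₀ ∈ S, B = G.component S e₀

/-- A `k`-flow: an orientation `D` (given by the tail/head pair of each edge)
together with an integer-valued function `f` with `|f e| < k`, conserved at
every vertex. -/
def IsIntFlow (k : ℕ) (D : G.E → G.V × G.V) (f : G.E → ℤ) : Prop :=
  (∀ e : G.E, s((D e).1, (D e).2) = G.ends e) ∧
    (∀ e : G.E, |f e| < (k : ℤ)) ∧
    ∀ v : G.V, (∑ᶠ e ∈ {e : G.E | (D e).1 = v}, f e) =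
      ∑ᶠ e ∈ {e : G.E | (D e).2 = v}, f e

end Multigraph

open Multigraph in
private lemma even_iff_cast_zmod2 (n : ℕ) : Even n ↔ ((n : ZMod 2) = 0) := by
  rw [ZMod.natCast_eq_zero_iff, Nat.even_iff, Nat.dvd_iff_mod_eq_zero]

open Multigraph in
/-- The set where a `ZMod 2`-valued function equals 1 has even degree at `v`
iff the sum of the function over non-loop edges at `v` vanishes. -/
private lemma even_degIn_iff (G : Multigraph) (g : G.E → ZMod 2) (v : G.V) :
    Even (G.degIn {e | g e = 1} v) ↔
      (∑ᶠ e ∈ {e : G.E | v ∈ G.ends e ∧ ¬ (G.ends e).IsDiag}, g e) = 0 := by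
  classical
  haveI : Fintype G.E := Fintype.ofFinite _
  have hfin : ({e : G.E | v ∈ G.ends e ∧ ¬ (G.ends e).IsDiag} : Set G.E).Finite :=
    Set.toFinite _
  rw [finsum_mem_eq_finite_toFinset_sum _ hfin]
  have hred : Even (G.degIn {e | g e = 1} v) ↔
      Even (Nat.card {e : G.E // e ∈ ({e | g e = 1} : Set G.E) ∧ v ∈ G.ends e ∧
        ¬ (G.ends e).IsDiag}) := by
    unfold Multigraph.degIn
    simp [Nat.even_add, even_two_mul]
  rw [hred, even_iff_cast_zmod2]
  have hcard : ((Nat.card {e : G.E // e ∈ ({e | g e = 1} : Set G.E) ∧ v ∈ G.ends e ∧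
        ¬ (G.ends e).IsDiag} : ℕ) : ZMod 2) = ∑ e ∈ hfin.toFinset, g e := by
    rw [Nat.card_eq_fintype_card, Fintype.card_subtype]
    have hT : hfin.toFinset
        = Finset.univ.filter (fun e : G.E => v ∈ G.ends e ∧ ¬ (G.ends e).IsDiag) := by
      ext e; simp
    rw [hT]
    rw [← Finset.sum_filter_add_sum_filter_not
      (Finset.univ.filter (fun e : G.E => v ∈ G.ends e ∧ ¬ (G.ends e).IsDiag))
      (fun e => g e = 1)]
    have h2 : ∑ e ∈ (Finset.univ.filter
          (fun e : G.E => v ∈ G.ends e ∧ ¬ (G.ends e).IsDiag)).filter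
          (fun e => ¬ g e = 1), g e = 0 := by
      apply Finset.sum_eq_zero
      intro e he
      have hne := (Finset.mem_filter.mp he).2
      have : ∀ x : ZMod 2, ¬ x = 1 → x = 0 := by decide
      exact this _ hne
    rw [h2, add_zero]
    have h1 : ∑ e ∈ (Finset.univ.filter
          (fun e : G.E => v ∈ G.ends e ∧ ¬ (G.ends e).IsDiag)).filter
          (fun e => g e = 1), g e
        = ((Finset.univ.filter
          (fun e : G.E => v ∈ G.ends e ∧ ¬ (G.ends e).IsDiag)).filter
          (fun e => g e = 1)).card • (1 : ZMod 2) := by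
      rw [← Finset.sum_const]
      exact Finset.sum_congr rfl (fun e he => (Finset.mem_filter.mp he).2)
    rw [h1, nsmul_eq_mul, mul_one]
    congr 1
    apply Finset.card_nbij' id id <;> intro a ha <;>
      simp_all [Finset.mem_filter, Set.mem_setOf_eq]
  rw [hcard]

open Multigraph symmDiff in
/-- Let `F` be a cycle of `G` and `f` a `ℤ₂×ℤ₂`-flow with
`E(G) − E(F) ⊆ supp f`.  With `C₁ = E_{f=(0,1)} ∪ E_{f=(1,0)}` and
`C₂ = E_{f=(0,1)} ∪ E_{f=(1,1)}`, the family `{C₁, C₂, C₁ Δ F}` is a cycle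
cover of `G` whose length equals `2|C₁ − F| + |C₂| + |F|`, which equals
`m + |C₁ − F| + |C₂ ∩ F| + |(C₁ ∩ C₂) − F|`. -/
theorem second_cover (G : Multigraph) (m : ℕ) (hm : m = Nat.card G.E)
    (F : Set G.E) (hF : G.IsCycle F)
    (f : G.E → ZMod 2 × ZMod 2) (hf : G.IsFlow f)
    (hsupp : ∀ e : G.E, e ∉ F → f e ≠ (0, 0))
    (C₁ C₂ : Set G.E)
    (hC₁ : C₁ = {e : G.E | f e = (0, 1)} ∪ {e : G.E | f e = (1, 0)})
    (hC₂ : C₂ = {e : G.E | f e = (0, 1)} ∪ {e : G.E | f e = (1, 1)}) :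
    G.IsCycle C₁ ∧ G.IsCycle C₂ ∧ G.IsCycle (C₁ ∆ F) ∧
    (∀ e : G.E, e ∈ C₁ ∪ C₂ ∪ (C₁ ∆ F)) ∧
    C₁.ncard + C₂.ncard + (C₁ ∆ F).ncard
      = 2 * (C₁ \ F).ncard + C₂.ncard + F.ncard ∧
    C₁.ncard + C₂.ncard + (C₁ ∆ F).ncard
      = m + (C₁ \ F).ncard + (C₂ ∩ F).ncard + ((C₁ ∩ C₂) \ F).ncard := by
  classical
  haveI : Fintype G.E := Fintype.ofFinite _
  set g₁ : G.E → ZMod 2 := fun e => (f e).1 + (f e).2 with hg₁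
  set g₂ : G.E → ZMod 2 := fun e => (f e).2 with hg₂
  set g₃ : G.E → ZMod 2 := fun e => g₁ e + (if e ∈ F then 1 else 0) with hg₃
  have hC₁' : C₁ = {e | g₁ e = 1} := by
    rw [hC₁]; ext e
    simp only [Set.mem_union, Set.mem_setOf_eq, hg₁]
    have : ∀ x : ZMod 2 × ZMod 2, (x = (0, 1) ∨ x = (1, 0)) ↔ x.1 + x.2 = 1 := by decide
    exact this (f e)
  have hC₂' : C₂ = {e | g₂ e = 1} := by
    rw [hC₂]; ext e
    simp only [Set.mem_union, Set.mem_setOf_eq, hg₂]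
    have : ∀ x : ZMod 2 × ZMod 2, (x = (0, 1) ∨ x = (1, 1)) ↔ x.2 = 1 := by decide
    exact this (f e)
  have hC₃' : C₁ ∆ F = {e | g₃ e = 1} := by
    ext e
    rw [Set.mem_symmDiff]
    simp only [hC₁', Set.mem_setOf_eq, hg₃]
    by_cases hFe : e ∈ F
    · simp only [hFe, if_pos, not_true, and_false, false_or, and_true, iff_true_intro hFe,
        true_and]
      generalize g₁ e = x
      revert x; decide
    · simp [hFe]
  -- per-vertex flow sums
  have key : ∀ v : G.V,
      (∑ᶠ e ∈ {e : G.E | v ∈ G.ends e ∧ ¬ (G.ends e).IsDiag}, g₁ e) = 0 ∧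
      (∑ᶠ e ∈ {e : G.E | v ∈ G.ends e ∧ ¬ (G.ends e).IsDiag}, g₂ e) = 0 := by
    intro v
    have hfin : ({e : G.E | v ∈ G.ends e ∧ ¬ (G.ends e).IsDiag} : Set G.E).Finite :=
      Set.toFinite _
    have h0 : ∑ e ∈ hfin.toFinset, f e = 0 := by
      rw [← finsum_mem_eq_finite_toFinset_sum f hfin]; exact hf v
    have h1 : ∑ e ∈ hfin.toFinset, (f e).1 = 0 := by
      have := congrArg Prod.fst h0
      rwa [Prod.fst_sum] at this
    have h2 : ∑ e ∈ hfin.toFinset, (f e).2 = 0 := by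
      have := congrArg Prod.snd h0
      rwa [Prod.snd_sum] at this
    constructor <;> rw [finsum_mem_eq_finite_toFinset_sum _ hfin]
    · simp only [hg₁]
      rw [Finset.sum_add_distrib, h1, h2, add_zero]
    · exact h2
  have hcycF : ∀ v : G.V,
      (∑ᶠ e ∈ {e : G.E | v ∈ G.ends e ∧ ¬ (G.ends e).IsDiag},
        (if e ∈ F then (1 : ZMod 2) else 0)) = 0 := by
    intro v
    have hFeq : F = {e : G.E | (if e ∈ F then (1 : ZMod 2) else 0) = 1} := by
      ext e; by_cases he : e ∈ F <;> simp [he]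
    exact (even_degIn_iff G (fun e => if e ∈ F then (1 : ZMod 2) else 0) v).mp
      (by rw [← hFeq]; exact hF v)
  have hcyc1 : G.IsCycle C₁ := by
    intro v
    rw [hC₁']
    exact (even_degIn_iff G g₁ v).mpr (key v).1
  have hcyc2 : G.IsCycle C₂ := by
    intro v
    rw [hC₂']
    exact (even_degIn_iff G g₂ v).mpr (key v).2
  have hcyc3 : G.IsCycle (C₁ ∆ F) := by
    intro v
    rw [hC₃']
    apply (even_degIn_iff G g₃ v).mpr
    have hfin : ({e : G.E | v ∈ G.ends e ∧ ¬ (G.ends e).IsDiag} : Set G.E).Finite :=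
      Set.toFinite _
    rw [finsum_mem_eq_finite_toFinset_sum _ hfin]
    simp only [hg₃]
    rw [Finset.sum_add_distrib]
    have e1 : ∑ e ∈ hfin.toFinset, g₁ e = 0 := by
      rw [← finsum_mem_eq_finite_toFinset_sum _ hfin]; exact (key v).1
    have e2 : ∑ e ∈ hfin.toFinset, (if e ∈ F then (1 : ZMod 2) else 0) = 0 := by
      rw [← finsum_mem_eq_finite_toFinset_sum _ hfin]; exact hcycF v
    rw [e1, e2, add_zero]
  have hcover : ∀ e : G.E, e ∈ C₁ ∪ C₂ ∪ (C₁ ∆ F) := by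
    intro e
    by_cases h1 : e ∈ C₁
    · exact Or.inl (Or.inl h1)
    by_cases h2 : e ∈ C₂
    · exact Or.inl (Or.inr h2)
    have hzero : f e = (0, 0) := by
      have m1 : ¬ (f e = (0, 1) ∨ f e = (1, 0)) := by
        intro h; exact h1 (by rw [hC₁]; exact h)
      have m2 : ¬ (f e = (0, 1) ∨ f e = (1, 1)) := by
        intro h; exact h2 (by rw [hC₂]; exact h)
      revert m1 m2
      generalize f e = x
      revert x; decide
    have heF : e ∈ F := by
      by_contra heF
      exact hsupp e heF hzero
    exact Or.inr (Set.mem_symmDiff.mpr (Or.inr ⟨heF, h1⟩))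
  -- counting
  have d1 : (C₁ ∩ F).ncard + (C₁ \ F).ncard = C₁.ncard :=
    Set.ncard_inter_add_ncard_diff_eq_ncard C₁ F
  have d2 : (F ∩ C₁).ncard + (F \ C₁).ncard = F.ncard :=
    Set.ncard_inter_add_ncard_diff_eq_ncard F C₁
  have dint : (C₁ ∩ F).ncard = (F ∩ C₁).ncard := by rw [Set.inter_comm]
  have dΔ : (C₁ ∆ F).ncard = (C₁ \ F).ncard + (F \ C₁).ncard := by
    rw [Set.symmDiff_def]
    exact Set.ncard_union_eq (disjoint_sdiff_sdiff)
  have hcompl : Fᶜ = (C₁ \ F) ∪ (C₂ \ F) := by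
    ext e
    simp only [Set.mem_compl_iff, Set.mem_union, Set.mem_diff]
    constructor
    · intro he
      have hne : f e ≠ (0, 0) := hsupp e he
      have hor : e ∈ C₁ ∨ e ∈ C₂ := by
        rw [hC₁, hC₂]
        simp only [Set.mem_union, Set.mem_setOf_eq]
        revert hne
        generalize f e = x
        revert x; decide
      rcases hor with h | h
      · exact Or.inl ⟨h, he⟩
      · exact Or.inr ⟨h, he⟩
    · rintro (⟨_, h⟩ | ⟨_, h⟩) <;> exact h
  have hm' : F.ncard + (Fᶜ).ncard = m := by
    rw [hm]; exact Set.ncard_add_ncard_compl F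
  have hcomplcard : (Fᶜ).ncard = ((C₁ \ F) ∪ (C₂ \ F)).ncard := by rw [hcompl]
  have hu : ((C₁ \ F) ∪ (C₂ \ F)).ncard + ((C₁ \ F) ∩ (C₂ \ F)).ncard
      = (C₁ \ F).ncard + (C₂ \ F).ncard :=
    Set.ncard_union_add_ncard_inter _ _
  have hintd : (C₁ \ F) ∩ (C₂ \ F) = (C₁ ∩ C₂) \ F := by
    ext e
    simp only [Set.mem_inter_iff, Set.mem_diff]
    tauto
  have hc2 : (C₂ ∩ F).ncard + (C₂ \ F).ncard = C₂.ncard :=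
    Set.ncard_inter_add_ncard_diff_eq_ncard C₂ F
  rw [hintd] at hu
  rw [hcomplcard] at hm'
  refine ⟨hcyc1, hcyc2, hcyc3, hcover, ?_, ?_⟩ <;> omega
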